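/- arXiv:2110.10737 — 2 statements merged into one kernel-verified Lean document; each statement's English description precedes it below -/
import Mathlib

section
/- Second-order Gamma Stein identity: if X ~ Gamma(m, 1) with integer m ≥ 1 and g : (0,∞) → ℝ is twice continuously differentiable with all occurring expectations finite and suitable boundary decay, then E[X² g''(X)] = Cov(g(X), (X − m − 1)²). -/
open MeasureTheory ProbabilityTheory

noncomputable def cov {Ω : Type*} [MeasurableSpace Ω] (P : Measure Ω) (V W : Ω → ℝ) : ℝ :=
  ∫ ω, (V ω - ∫ x, V x ∂P) * (W ω - ∫ x, W x ∂P) ∂P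
open Filter

section AuxGammaStein

open MeasureTheory ProbabilityTheory Filter Set
open scoped ENNReal NNReal

set_option maxHeartbeats 1000000

private lemma aux_integrableOn_pow_exp (j : ℕ) :
    IntegrableOn (fun x : ℝ => x ^ j * Real.exp (-x)) (Set.Ioi 0) := by
  have h := Real.GammaIntegral_convergent (s := (j : ℝ) + 1) (by positivity)
  refine h.congr_fun (fun x hx => ?_) measurableSet_Ioi
  beta_reduce
  rw [show ((j : ℝ) + 1 - 1) = (j : ℝ) by ring, Real.rpow_natCast, mul_comm]

private lemma aux_integral_pow_exp (j : ℕ) :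
    ∫ x in Set.Ioi 0, x ^ j * Real.exp (-x) = Real.Gamma ((j : ℝ) + 1) := by
  have h := Real.integral_rpow_mul_exp_neg_mul_Ioi (a := (j : ℝ) + 1)
    (by positivity) one_pos
  rw [show ((j:ℝ)+1-1) = (j:ℝ) by ring] at h
  simp only [one_mul, Real.one_rpow, one_div, inv_one] at h
  rw [← h]
  refine setIntegral_congr_fun measurableSet_Ioi (fun x hx => ?_)
  rw [Real.rpow_natCast]

private lemma aux_key_zero (G G' : ℝ → ℝ)
    (hd : ∀ x ∈ Set.Ioi (0:ℝ), HasDerivAt G (G' x) x)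
    (hi : IntegrableOn G' (Set.Ioi 0))
    (h0 : Tendsto G (nhdsWithin 0 (Set.Ioi 0)) (nhds 0))
    (ht : Tendsto G atTop (nhds 0)) :
    ∫ x in Set.Ioi 0, G' x = 0 := by
  have step : ∀ ε : ℝ, 0 < ε → ∫ x in Set.Ioi ε, G' x = - G ε := by
    intro ε hε
    have h1 : ∀ x ∈ Set.Ioi ε, HasDerivAt G (G' x) x :=
      fun x hx => hd x (lt_trans hε hx)
    have hcont : ContinuousWithinAt G (Set.Ici ε) ε :=
      (hd ε hε).continuousAt.continuousWithinAt
    have := integral_Ioi_of_hasDerivAt_of_tendsto hcont h1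
      (hi.mono_set (Set.Ioi_subset_Ioi hε.le)) ht
    rw [this]; ring
  set s : ℕ → Set ℝ := fun n => Set.Ioi ((1:ℝ)/(n+1)) with hs
  have hsm : ∀ n, MeasurableSet (s n) := fun n => measurableSet_Ioi
  have hmono : Monotone s := by
    intro a b hab
    apply Set.Ioi_subset_Ioi
    have : (a:ℝ) ≤ b := by exact_mod_cast hab
    gcongr
  have hunion : (⋃ n, s n) = Set.Ioi 0 := by
    ext x
    simp only [Set.mem_iUnion, hs, Set.mem_Ioi]
    constructor
    · rintro ⟨n, hn⟩; exact lt_trans (by positivity) hn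
    · intro hx; exact exists_nat_one_div_lt hx
  have h1 : Tendsto (fun n => ∫ x in s n, G' x) atTop (nhds (∫ x in Set.Ioi 0, G' x)) := by
    have := tendsto_setIntegral_of_monotone hsm hmono (hunion ▸ hi)
    rwa [hunion] at this
  have heps : Tendsto (fun n : ℕ => (1:ℝ)/(n+1)) atTop (nhdsWithin 0 (Set.Ioi 0)) := by
    rw [tendsto_nhdsWithin_iff]
    refine ⟨tendsto_one_div_add_atTop_nhds_zero_nat, ?_⟩
    exact Eventually.of_forall (fun n => Set.mem_Ioi.mpr (by positivity))
  have h2 : Tendsto (fun n => ∫ x in s n, G' x) atTop (nhds 0) := by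
    have : Tendsto (fun n : ℕ => - G ((1:ℝ)/(n+1))) atTop (nhds 0) := by
      have := (h0.comp heps).neg
      simpa using this
    refine this.congr (fun n => ?_)
    exact (step _ (by positivity)).symm
  exact tendsto_nhds_unique h1 h2

private lemma aux_core (k : ℕ) (g g' g'' : ℝ → ℝ)
    (hg : ∀ x ∈ Set.Ioi (0 : ℝ), HasDerivAt g (g' x) x)
    (hg' : ∀ x ∈ Set.Ioi (0 : ℝ), HasDerivAt g' (g'' x) x)
    (hi1 : IntegrableOn (fun x : ℝ => (x ^ 2 * g'' x) * (x ^ k * Real.exp (-x))) (Set.Ioi 0))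
    (hi2 : IntegrableOn (fun x : ℝ => ((x - (k+1:ℕ) - 1) ^ 2 * g x) * (x ^ k * Real.exp (-x))) (Set.Ioi 0))
    (hi3 : IntegrableOn (fun x : ℝ => g x * (x ^ k * Real.exp (-x))) (Set.Ioi 0))
    (hb0 : Tendsto (fun x : ℝ => x ^ (k+1 : ℕ) * Real.exp (-x) * (x * g' x))
      (nhdsWithin 0 (Set.Ioi 0)) (nhds 0))
    (hbtop : Tendsto (fun x : ℝ => x ^ (k+1 : ℕ) * Real.exp (-x) * (x * g' x))
      atTop (nhds 0))
    (hb0' : Tendsto (fun x : ℝ => x ^ (k+1 : ℕ) * Real.exp (-x) * ((x - (k+1:ℕ) - 1) * g x))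
      (nhdsWithin 0 (Set.Ioi 0)) (nhds 0))
    (hbtop' : Tendsto (fun x : ℝ => x ^ (k+1 : ℕ) * Real.exp (-x) * ((x - (k+1:ℕ) - 1) * g x))
      atTop (nhds 0)) :
    ∫ x in Set.Ioi 0, (x ^ 2 * g'' x) * (x ^ k * Real.exp (-x))
      = (∫ x in Set.Ioi 0, ((x - (k+1:ℕ) - 1) ^ 2 * g x) * (x ^ k * Real.exp (-x)))
        - ((k:ℝ) + 2) * ∫ x in Set.Ioi 0, g x * (x ^ k * Real.exp (-x)) := by
  set G : ℝ → ℝ := fun x => x ^ (k+1 : ℕ) * Real.exp (-x) * (x * g' x)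
      + x ^ (k+1 : ℕ) * Real.exp (-x) * ((x - (k+1:ℕ) - 1) * g x) with hGdef
  set G' : ℝ → ℝ := fun x => (x ^ 2 * g'' x) * (x ^ k * Real.exp (-x))
      - ((x - (k+1:ℕ) - 1) ^ 2 * g x) * (x ^ k * Real.exp (-x))
      + ((k:ℝ) + 2) * (g x * (x ^ k * Real.exp (-x))) with hG'def
  have hd : ∀ x ∈ Set.Ioi (0:ℝ), HasDerivAt G (G' x) x := by
    intro x hx
    have he : HasDerivAt (fun y : ℝ => Real.exp (-y)) (-Real.exp (-x)) x := by
      simpa using ((hasDerivAt_neg x).exp)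
    have hxm : HasDerivAt (fun y : ℝ => y ^ (k+1 : ℕ)) (((k:ℝ)+1) * x ^ k) x := by
      simpa using hasDerivAt_pow (k+1) x
    have h1 : HasDerivAt (fun y : ℝ => y ^ (k+1:ℕ) * Real.exp (-y))
        (((k:ℝ)+1) * x ^ k * Real.exp (-x) + x ^ (k+1:ℕ) * -Real.exp (-x)) x := hxm.mul he
    have hxg' : HasDerivAt (fun y : ℝ => y * g' y) (1 * g' x + x * g'' x) x :=
      (hasDerivAt_id x).mul (hg' x hx)
    have hfac : HasDerivAt (fun y : ℝ => y - (k+1:ℕ) - 1) 1 x := by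
      simpa using (((hasDerivAt_id x).sub_const ((k+1:ℕ):ℝ)).sub_const 1)
    have h2 : HasDerivAt (fun y : ℝ => (y - (k+1:ℕ) - 1) * g y)
        (1 * g x + (x - (k+1:ℕ) - 1) * g' x) x := hfac.mul (hg x hx)
    have hG := (h1.mul hxg').add (h1.mul h2)
    refine hG.congr_deriv ?_
    simp only [hG'def]
    push_cast
    ring
  have hi : IntegrableOn G' (Set.Ioi 0) := by
    exact (hi1.sub hi2).add (hi3.const_mul _)
  have h0 : Tendsto G (nhdsWithin 0 (Set.Ioi 0)) (nhds 0) := by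
    have := hb0.add hb0'; rw [add_zero] at this; exact this
  have ht : Tendsto G atTop (nhds 0) := by
    have := hbtop.add hbtop'; rw [add_zero] at this; exact this
  have hz := aux_key_zero G G' hd hi h0 ht
  have hs2 : Integrable (fun x : ℝ => (x ^ 2 * g'' x) * (x ^ k * Real.exp (-x))
      - ((x - (k+1:ℕ) - 1) ^ 2 * g x) * (x ^ k * Real.exp (-x)))
      ((volume : Measure ℝ).restrict (Set.Ioi 0)) := hi1.sub hi2
  have hs3 : Integrable (fun x : ℝ => ((k:ℝ) + 2) * (g x * (x ^ k * Real.exp (-x))))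
      ((volume : Measure ℝ).restrict (Set.Ioi 0)) := hi3.const_mul _
  simp only [hG'def] at hz
  rw [integral_add hs2 hs3, integral_sub hi1 hi2, integral_const_mul] at hz
  linarith

private lemma aux_integrableOn_moment (k : ℕ) :
    IntegrableOn (fun x : ℝ => (x - ((k+1:ℕ):ℝ) - 1) ^ 2 * (x ^ k * Real.exp (-x)))
      (Set.Ioi 0) := by
  have h : (fun x : ℝ => (x - ((k+1:ℕ):ℝ) - 1) ^ 2 * (x ^ k * Real.exp (-x)))
      = fun x : ℝ => x ^ (k+2) * Real.exp (-x)
        - (2 * ((k:ℝ) + 2)) * (x ^ (k+1) * Real.exp (-x))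
        + ((k:ℝ) + 2) ^ 2 * (x ^ k * Real.exp (-x)) := by
    funext x; push_cast; ring
  rw [h]
  exact ((aux_integrableOn_pow_exp (k+2)).sub
    ((aux_integrableOn_pow_exp (k+1)).const_mul _)).add
    ((aux_integrableOn_pow_exp k).const_mul _)

private lemma aux_moment (k : ℕ) :
    ∫ x in Set.Ioi 0, (x - ((k+1:ℕ):ℝ) - 1) ^ 2 * (x ^ k * Real.exp (-x))
      = ((k:ℝ) + 2) * Real.Gamma ((k:ℝ) + 1) := by
  have h : (fun x : ℝ => (x - ((k+1:ℕ):ℝ) - 1) ^ 2 * (x ^ k * Real.exp (-x)))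
      = fun x : ℝ => x ^ (k+2) * Real.exp (-x)
        - (2 * ((k:ℝ) + 2)) * (x ^ (k+1) * Real.exp (-x))
        + ((k:ℝ) + 2) ^ 2 * (x ^ k * Real.exp (-x)) := by
    funext x; push_cast; ring
  have hsub : Integrable (fun x : ℝ => x ^ (k+2) * Real.exp (-x)
      - (2 * ((k:ℝ) + 2)) * (x ^ (k+1) * Real.exp (-x)))
      ((volume : Measure ℝ).restrict (Set.Ioi 0)) :=
    (aux_integrableOn_pow_exp (k+2)).sub ((aux_integrableOn_pow_exp (k+1)).const_mul _)
  rw [h, integral_add hsub ((aux_integrableOn_pow_exp k).const_mul _),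
    integral_sub (aux_integrableOn_pow_exp (k+2))
      ((aux_integrableOn_pow_exp (k+1)).const_mul _),
    integral_const_mul, integral_const_mul,
    aux_integral_pow_exp, aux_integral_pow_exp, aux_integral_pow_exp]
  have h2 : Real.Gamma (((k:ℝ) + 1) + 1) = ((k:ℝ)+1) * Real.Gamma ((k:ℝ)+1) :=
    Real.Gamma_add_one (by positivity)
  have h3 : Real.Gamma (((k:ℝ) + 2) + 1) = ((k:ℝ)+2) * (((k:ℝ)+1) * Real.Gamma ((k:ℝ)+1)) := by
    rw [Real.Gamma_add_one (by positivity), show ((k:ℝ)+2) = ((k:ℝ)+1)+1 by ring, h2]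
  push_cast
  rw [show ((k:ℝ)+2+1) = ((k:ℝ)+2)+1 by ring, show ((k:ℝ)+1+1) = ((k:ℝ)+1)+1 by ring, h2, h3]
  ring

private lemma aux_pdf_eq (m : ℕ) (hm : 1 ≤ m) {x : ℝ} (hx : 0 < x) :
    gammaPDFReal m 1 x = x ^ (m - 1) * Real.exp (-x) / Real.Gamma m := by
  rw [gammaPDFReal, if_pos hx.le, Real.one_rpow]
  have h1 : x ^ ((m:ℝ) - 1) = x ^ (m - 1 : ℕ) := by
    rw [← Real.rpow_natCast x (m-1)]
    congr 1
    rw [Nat.cast_sub hm]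
    norm_num
  rw [h1, one_mul]
  ring

private lemma aux_hae (m : ℕ) (hm : 1 ≤ m) (f : ℝ → ℝ) :
    (fun x => gammaPDFReal m 1 x * f x)
      =ᵐ[(volume : Measure ℝ)]
    (Set.Ioi 0).indicator (fun x => f x * (x ^ (m - 1) * Real.exp (-x)) / Real.Gamma m) := by
  have h0 : ∀ᵐ (x : ℝ) ∂(volume : Measure ℝ), x ∉ ({0} : Set ℝ) :=
    measure_eq_zero_iff_ae_notMem.mp (measure_singleton 0)
  filter_upwards [h0] with x hx
  simp only [Set.mem_singleton_iff] at hx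
  rcases lt_or_gt_of_ne hx with h | h
  · rw [Set.indicator_of_notMem (by simpa using h.le), gammaPDFReal, if_neg (not_le.mpr h),
      zero_mul]
  · rw [Set.indicator_of_mem (Set.mem_Ioi.mpr h), aux_pdf_eq m hm h]
    ring

private lemma aux_gamma_ae_Ioi (m : ℕ) (hm : 1 ≤ m) :
    ∀ᵐ x ∂(gammaMeasure m 1), x ∈ Set.Ioi (0:ℝ) := by
  have hIic : (gammaMeasure (m:ℝ) 1) (Set.Iic 0) = 0 := by
    rw [gammaMeasure, withDensity_apply (gammaPDF m 1) measurableSet_Iic]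
    have h2 : ∫⁻ x in Set.Iic (0:ℝ), gammaPDF m 1 x = ∫⁻ x in Set.Iio (0:ℝ), gammaPDF m 1 x :=
      (setLIntegral_congr (μ := (volume : Measure ℝ))
        ((Iio_ae_eq_Iic (μ := (volume : Measure ℝ)) (a := (0:ℝ))).symm))
    rw [h2]
    exact lintegral_gammaPDF_of_nonpos le_rfl
  refine mem_ae_iff.mpr ?_
  have hset : {x : ℝ | (fun x => x ∈ Set.Ioi (0:ℝ)) x}ᶜ = Set.Iic 0 := by ext y; simp
  rwa [hset]

private lemma aux_aesm (m : ℕ) (hm : 1 ≤ m) (f : ℝ → ℝ) (hf : ContinuousOn f (Set.Ioi 0)) :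
    AEStronglyMeasurable f (gammaMeasure m 1) := by
  rw [← Measure.restrict_eq_self_of_ae_mem (aux_gamma_ae_Ioi m hm)]
  exact hf.aestronglyMeasurable measurableSet_Ioi

private lemma aux_integral_gamma (m : ℕ) (hm : 1 ≤ m) (f : ℝ → ℝ) :
    ∫ x, f x ∂(gammaMeasure m 1)
      = (∫ x in Set.Ioi 0, f x * (x ^ (m - 1) * Real.exp (-x))) / Real.Gamma m := by
  have hγ : gammaMeasure (m:ℝ) 1 = (volume : Measure ℝ).withDensity
      (fun x => ((gammaPDFReal m 1 x).toNNReal : ℝ≥0∞)) := rfl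
  rw [hγ, integral_withDensity_eq_integral_smul
    ((measurable_gammaPDFReal m 1).real_toNNReal) f]
  have h1 : ∀ x : ℝ, (gammaPDFReal m 1 x).toNNReal • f x = gammaPDFReal m 1 x * f x := by
    intro x
    rw [NNReal.smul_def, Real.coe_toNNReal _
      (gammaPDFReal_nonneg (by exact_mod_cast hm : (0:ℝ) < m) one_pos x), smul_eq_mul]
  simp only [h1]
  rw [integral_congr_ae (aux_hae m hm f), integral_indicator measurableSet_Ioi,
    integral_div]

private lemma aux_integrable_gamma_iff (m : ℕ) (hm : 1 ≤ m) (f : ℝ → ℝ) :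
    Integrable f (gammaMeasure m 1)
      ↔ IntegrableOn (fun x => f x * (x ^ (m - 1) * Real.exp (-x))) (Set.Ioi 0) := by
  have hΓ : Real.Gamma m ≠ 0 :=
    (Real.Gamma_pos_of_pos (by exact_mod_cast hm : (0:ℝ) < m)).ne'
  rw [gammaMeasure, show gammaPDF (m:ℝ) 1 = fun x => ENNReal.ofReal (gammaPDFReal m 1 x) from rfl,
    integrable_withDensity_iff ((measurable_gammaPDFReal m 1).ennreal_ofReal)
    (Eventually.of_forall fun x => ENNReal.ofReal_lt_top)]
  have h1 : (fun x => f x * (ENNReal.ofReal (gammaPDFReal m 1 x)).toReal)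
      = fun x => gammaPDFReal m 1 x * f x := by
    funext x
    rw [ENNReal.toReal_ofReal
      (gammaPDFReal_nonneg (by exact_mod_cast hm : (0:ℝ) < m) one_pos x), mul_comm]
  rw [h1, integrable_congr (aux_hae m hm f),
    integrable_indicator_iff measurableSet_Ioi]
  constructor
  · intro h
    have h2 := h.mul_const (Real.Gamma m)
    refine h2.congr (Eventually.of_forall fun x => ?_)
    field_simp
  · intro h
    exact h.div_const _

private lemma aux_cov_eq {Ω : Type*} [MeasurableSpace Ω] (P : Measure Ω)
    [IsProbabilityMeasure P] (V W : Ω → ℝ)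
    (hV : Integrable V P) (hW : Integrable W P)
    (hVW : Integrable (fun ω => V ω * W ω) P) :
    cov P V W = (∫ ω, V ω * W ω ∂P) - (∫ ω, V ω ∂P) * (∫ ω, W ω ∂P) := by
  rw [cov]
  set a := ∫ x, V x ∂P with ha
  set b := ∫ x, W x ∂P with hb
  have h1 : Integrable (fun ω => V ω * W ω - a * W ω) P := hVW.sub (hW.const_mul a)
  have h2 : Integrable (fun ω => b * V ω - a * b) P := (hV.const_mul b).sub (integrable_const _)
  calc ∫ ω, (V ω - a) * (W ω - b) ∂P
      = ∫ ω, ((V ω * W ω - a * W ω) - (b * V ω - a * b)) ∂P := by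
        congr 1; funext ω; ring
    _ = (∫ ω, (V ω * W ω - a * W ω) ∂P) - ∫ ω, (b * V ω - a * b) ∂P :=
        integral_sub h1 h2
    _ = ((∫ ω, V ω * W ω ∂P) - a * b) - (b * a - a * b) := by
        rw [integral_sub hVW (hW.const_mul a), integral_sub (hV.const_mul b) (integrable_const _),
          integral_const_mul, integral_const_mul, integral_const]
        simp [← ha, ← hb, measure_univ]
    _ = (∫ ω, V ω * W ω ∂P) - a * b := by ring

end AuxGammaStein

theorem gamma_second_order_stein_identity
    {Ω : Type*} [MeasurableSpace Ω] (P : Measure Ω) [IsProbabilityMeasure P]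
    (m : ℕ) (hm : 1 ≤ m) (X : Ω → ℝ) (hX : P.map X = gammaMeasure m 1)
    (g g' g'' : ℝ → ℝ)
    (hg : ∀ x ∈ Set.Ioi (0 : ℝ), HasDerivAt g (g' x) x)
    (hg' : ∀ x ∈ Set.Ioi (0 : ℝ), HasDerivAt g' (g'' x) x)
    (hg'' : ContinuousOn g'' (Set.Ioi 0))
    (hint1 : Integrable (fun ω => (X ω) ^ 2 * g'' (X ω)) P)
    (hint2 : Integrable (fun ω => X ω * g' (X ω)) P)
    (hint3 : Integrable (fun ω => g (X ω)) P)
    (hint4 : Integrable (fun ω => (X ω - m - 1) ^ 2 * g (X ω)) P)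
    (hb0 : Tendsto (fun x : ℝ => x ^ (m : ℕ) * Real.exp (-x) * (x * g' x))
      (nhdsWithin 0 (Set.Ioi 0)) (nhds 0))
    (hbtop : Tendsto (fun x : ℝ => x ^ (m : ℕ) * Real.exp (-x) * (x * g' x))
      atTop (nhds 0))
    (hb0' : Tendsto (fun x : ℝ => x ^ (m : ℕ) * Real.exp (-x) * ((x - m - 1) * g x))
      (nhdsWithin 0 (Set.Ioi 0)) (nhds 0))
    (hbtop' : Tendsto (fun x : ℝ => x ^ (m : ℕ) * Real.exp (-x) * ((x - m - 1) * g x))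
      atTop (nhds 0)) :
    ∫ ω, (X ω) ^ 2 * g'' (X ω) ∂P
      = cov P (fun ω => g (X ω)) (fun ω => (X ω - m - 1) ^ 2) := by
  obtain ⟨k, rfl⟩ : ∃ k, m = k + 1 := ⟨m - 1, (Nat.succ_pred_eq_of_pos hm).symm⟩
  have hm1 : 1 ≤ k + 1 := Nat.le_add_left 1 k
  have hΓpos : (0:ℝ) < Real.Gamma ((k+1:ℕ):ℝ) :=
    Real.Gamma_pos_of_pos (by exact_mod_cast hm1)
  have hΓ : Real.Gamma ((k+1:ℕ):ℝ) ≠ 0 := hΓpos.ne'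
  -- X is a.e.-measurable
  have hprob : IsProbabilityMeasure (gammaMeasure ((k+1:ℕ):ℝ) 1) :=
    isProbabilityMeasure_gammaMeasure (by exact_mod_cast hm1) one_pos
  have hXae : AEMeasurable X P := by
    by_contra h
    rw [Measure.map_of_not_aemeasurable h] at hX
    have h1 := hprob.measure_univ
    rw [← hX] at h1
    simp at h1
  -- transfer of integrals
  have hEq : ∀ f : ℝ → ℝ, ContinuousOn f (Set.Ioi 0) →
      ∫ ω, f (X ω) ∂P
        = (∫ x in Set.Ioi 0, f x * (x ^ k * Real.exp (-x))) / Real.Gamma ((k+1:ℕ):ℝ) := by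
    intro f hf
    have h1 := integral_map (φ := X) (μ := P) hXae
      (by rw [hX]; exact aux_aesm (k+1) hm1 f hf)
    rw [hX] at h1
    rw [← h1, aux_integral_gamma (k+1) hm1 f]
    simp only [Nat.add_sub_cancel]
  have hIff : ∀ f : ℝ → ℝ, ContinuousOn f (Set.Ioi 0) →
      (Integrable (fun ω => f (X ω)) P ↔
        MeasureTheory.IntegrableOn (fun x => f x * (x ^ k * Real.exp (-x))) (Set.Ioi 0)) := by
    intro f hf
    have h1 := integrable_map_measure (μ := P) (f := X) (g := f)
      (by rw [hX]; exact aux_aesm (k+1) hm1 f hf) hXae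
    rw [hX] at h1
    have h2 := aux_integrable_gamma_iff (k+1) hm1 f
    simp only [Nat.add_sub_cancel] at h2
    exact (h1.symm.trans h2)
  -- continuity facts
  have hcg : ContinuousOn g (Set.Ioi 0) :=
    fun x hx => (hg x hx).continuousAt.continuousWithinAt
  have hcpoly : Continuous (fun x : ℝ => (x - ((k+1:ℕ):ℝ) - 1) ^ 2) :=
    ((continuous_id.sub continuous_const).sub continuous_const).pow 2
  have hc1 : ContinuousOn (fun x : ℝ => x ^ 2 * g'' x) (Set.Ioi 0) :=
    (continuous_id.pow 2).continuousOn.mul hg''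
  have hc2 : ContinuousOn (fun x : ℝ => (x - ((k+1:ℕ):ℝ) - 1) ^ 2 * g x) (Set.Ioi 0) :=
    hcpoly.continuousOn.mul hcg
  -- integrabilities on (0, ∞)
  have hi1 : IntegrableOn (fun x : ℝ => (x ^ 2 * g'' x) * (x ^ k * Real.exp (-x)))
      (Set.Ioi 0) := (hIff _ hc1).mp hint1
  have hi2 : IntegrableOn
      (fun x : ℝ => ((x - (k+1:ℕ) - 1) ^ 2 * g x) * (x ^ k * Real.exp (-x)))
      (Set.Ioi 0) := (hIff _ hc2).mp hint4
  have hi3 : IntegrableOn (fun x : ℝ => g x * (x ^ k * Real.exp (-x))) (Set.Ioi 0) :=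
    (hIff _ hcg).mp hint3
  -- the core Stein computation
  have hcore := aux_core k g g' g'' hg hg' hi1 hi2 hi3 hb0 hbtop hb0' hbtop'
  -- the three expectations
  have hE1 : ∫ ω, (X ω) ^ 2 * g'' (X ω) ∂P
      = (∫ x in Set.Ioi 0, (x ^ 2 * g'' x) * (x ^ k * Real.exp (-x)))
        / Real.Gamma ((k+1:ℕ):ℝ) := hEq _ hc1
  have hEVW : ∫ ω, (X ω - ((k+1:ℕ):ℝ) - 1) ^ 2 * g (X ω) ∂P
      = (∫ x in Set.Ioi 0, ((x - (k+1:ℕ) - 1) ^ 2 * g x) * (x ^ k * Real.exp (-x)))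
        / Real.Gamma ((k+1:ℕ):ℝ) := hEq _ hc2
  have hEV : ∫ ω, g (X ω) ∂P
      = (∫ x in Set.Ioi 0, g x * (x ^ k * Real.exp (-x))) / Real.Gamma ((k+1:ℕ):ℝ) :=
    hEq _ hcg
  have hEW : ∫ ω, (X ω - ((k+1:ℕ):ℝ) - 1) ^ 2 ∂P = (k:ℝ) + 2 := by
    have h1 := hEq _ hcpoly.continuousOn
    rw [aux_moment k] at h1
    rw [h1, show (((k+1:ℕ):ℝ)) = (k:ℝ) + 1 by push_cast; ring,
      mul_div_assoc, div_self (by rw [show (((k:ℝ)+1)) = (((k+1:ℕ)):ℝ) by push_cast; ring]; exact hΓ),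
      mul_one]
  -- integrability of the factors
  have hW : Integrable (fun ω => (X ω - ((k+1:ℕ):ℝ) - 1) ^ 2) P :=
    (hIff _ hcpoly.continuousOn).mpr (aux_integrableOn_moment k)
  have hVW : Integrable (fun ω => g (X ω) * (X ω - ((k+1:ℕ):ℝ) - 1) ^ 2) P :=
    hint4.congr (Filter.Eventually.of_forall fun ω => mul_comm _ _)
  -- covariance
  have hcov := aux_cov_eq P (fun ω => g (X ω)) (fun ω => (X ω - ((k+1:ℕ):ℝ) - 1) ^ 2)
    hint3 hW hVW
  have hVWeq : ∫ ω, g (X ω) * (X ω - ((k+1:ℕ):ℝ) - 1) ^ 2 ∂P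
      = ∫ ω, (X ω - ((k+1:ℕ):ℝ) - 1) ^ 2 * g (X ω) ∂P :=
    integral_congr_ae (Filter.Eventually.of_forall fun ω => mul_comm _ _)
  rw [hE1, hcov, hVWeq, hEVW, hEV, hEW, hcore]
  field_simp
end

section
/- Let Z₁, Z₂, … be i.i.d. Exp(1) and ζ_{j,m} = Z_j + ⋯ + Z_{j+m-1}. For the kernel g(x) = x² − 2mx (arising from h(x,y) = (x−y)²), one has Cov(g(ζ_{1,m}), ζ_{1,m}) = 2m, and Σ_{j=1}^{2m} Cov(g(ζ_{m,m}), g(ζ_{j,m})) − [Cov(g(ζ_{1,m}), ζ_{1,m})]² = 2m(m+1)(2m+1)/3. -/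
open MeasureTheory ProbabilityTheory Real Finset
open scoped NNReal ENNReal Nat

lemma gw_pdf_exp : gammaPDF 1 1 = fun x : ℝ =>
    ((Real.toNNReal (if 0 ≤ x then Real.exp (-x) else 0) : ℝ≥0) : ℝ≥0∞) := by
  funext x
  simp [gammaPDF_eq, Real.Gamma_one, Real.rpow_zero, ENNReal.ofReal]

lemma gw_meas_d : Measurable (fun x : ℝ => Real.toNNReal (if 0 ≤ x then Real.exp (-x) else 0)) := by
  apply Measurable.real_toNNReal
  apply Measurable.ite
  · exact measurableSet_Ici
  · fun_prop
  · fun_prop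

lemma gw_ind (n : ℕ) : (fun x : ℝ => (if 0 ≤ x then Real.exp (-x) else 0) * x ^ n)
    = Set.indicator (Set.Ici 0) (fun x => Real.exp (-x) * x ^ n) := by
  funext x
  by_cases h : 0 ≤ x <;> simp [h, Set.indicator_of_mem, Set.indicator_of_notMem]

lemma gw_intOn (n : ℕ) : IntegrableOn (fun x : ℝ => Real.exp (-x) * x ^ n) (Set.Ici 0) := by
  rw [integrableOn_Ici_iff_integrableOn_Ioi]
  have h := Real.GammaIntegral_convergent (s := n + 1) (by positivity)
  apply h.congr_fun ?_ measurableSet_Ioi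
  intro x hx
  simp [add_sub_cancel_right, Real.rpow_natCast]

lemma gw_exp_moment (n : ℕ) : Integrable (fun x : ℝ => x ^ n) (expMeasure 1)
    ∧ (∫ x, x ^ n ∂(expMeasure 1)) = n ! := by
  have hme : expMeasure 1 = MeasureTheory.volume.withDensity
      (fun x => ((Real.toNNReal (if 0 ≤ x then Real.exp (-x) else 0) : ℝ≥0) : ℝ≥0∞)) := by
    rw [expMeasure, gammaMeasure, gw_pdf_exp]
  have hcoe : ∀ x : ℝ, ((Real.toNNReal (if 0 ≤ x then Real.exp (-x) else 0) : ℝ≥0) : ℝ)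
      = if 0 ≤ x then Real.exp (-x) else 0 := by
    intro x
    apply Real.coe_toNNReal
    split_ifs <;> positivity
  constructor
  · rw [hme, integrable_withDensity_iff_integrable_smul gw_meas_d]
    simp only [NNReal.smul_def, smul_eq_mul, hcoe, gw_ind n]
    rw [integrable_indicator_iff measurableSet_Ici]
    exact gw_intOn n
  · rw [hme, integral_withDensity_eq_integral_smul gw_meas_d]
    simp only [NNReal.smul_def, smul_eq_mul, hcoe, gw_ind n]
    rw [integral_indicator measurableSet_Ici, MeasureTheory.integral_Ici_eq_integral_Ioi]
    have h := Real.Gamma_eq_integral (s := n + 1) (by positivity)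
    rw [show ((n : ℝ) + 1) = ((n : ℕ) : ℝ) + 1 by push_cast; ring, Real.Gamma_nat_eq_factorial] at h
    rw [h]
    · apply setIntegral_congr_fun measurableSet_Ioi
      intro x hx
      simp [add_sub_cancel_right, Real.rpow_natCast]

section GW

variable {Ω : Type*} [MeasurableSpace Ω] {P : Measure Ω} [IsProbabilityMeasure P]
  {Z : ℕ → Ω → ℝ}

/-- sum of `Z i` over a block -/
def gwS (Z : ℕ → Ω → ℝ) (A : Finset ℕ) (ω : Ω) : ℝ := ∑ i ∈ A, Z i ω

/-- rising factorial, real-valued -/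
noncomputable def gwRF (a p : ℕ) : ℝ := ∏ i ∈ Finset.range p, ((a : ℝ) + i)

lemma gw_Z_int (hmeas : ∀ i, Measurable (Z i)) (hdist : ∀ i, P.map (Z i) = expMeasure 1)
    (i n : ℕ) : Integrable (fun ω => Z i ω ^ n) P := by
  have h := (gw_exp_moment n).1
  rw [← hdist i] at h
  exact (integrable_map_measure ((measurable_id.pow_const n).aestronglyMeasurable) (hmeas i).aemeasurable).mp h

lemma gw_Z_mom (hmeas : ∀ i, Measurable (Z i)) (hdist : ∀ i, P.map (Z i) = expMeasure 1)
    (i n : ℕ) : (∫ ω, Z i ω ^ n ∂P) = n ! := by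
  have h := (gw_exp_moment n).2
  rw [← hdist i, integral_map (hmeas i).aemeasurable
    (by measurability : AEStronglyMeasurable (fun x : ℝ => x ^ n) (P.map (Z i)))] at h
  exact h

lemma gw_S_meas (hmeas : ∀ i, Measurable (Z i)) (A : Finset ℕ) : Measurable (gwS Z A) :=
  A.measurable_sum (fun i _ => hmeas i)

lemma gw_indep_ZS (hindep : iIndepFun Z P)
    (hmeas : ∀ i, Measurable (Z i)) {A : Finset ℕ} {i : ℕ} (hi : i ∉ A) :
    IndepFun (Z i) (gwS Z A) P := by
  have h := (hindep.indepFun_finsetSum_of_notMem hmeas hi).symm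
  have he : gwS Z A = ∑ j ∈ A, Z j := by
    funext ω; rw [gwS, Finset.sum_apply]
  rwa [he]

lemma gw_indep_SS (hindep : iIndepFun Z P)
    (hmeas : ∀ i, Measurable (Z i)) {A B : Finset ℕ} (h : Disjoint A B) :
    IndepFun (gwS Z A) (gwS Z B) P := by
  have hφ : Measurable (fun x : A → ℝ => ∑ i, x i) :=
    Finset.measurable_sum Finset.univ (fun i _ => measurable_pi_apply i)
  have hψ : Measurable (fun x : B → ℝ => ∑ i, x i) :=
    Finset.measurable_sum Finset.univ (fun i _ => measurable_pi_apply i)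
  have h1 := (hindep.indepFun_finset A B h hmeas).comp hφ hψ
  have e1 : ((fun x : A → ℝ => ∑ i, x i) ∘ (fun ω (i : A) => Z i ω)) = gwS Z A := by
    funext ω
    simp only [Function.comp_apply, gwS]
    exact Finset.sum_coe_sort A (fun i => Z i ω)
  have e2 : ((fun x : B → ℝ => ∑ i, x i) ∘ (fun ω (i : B) => Z i ω)) = gwS Z B := by
    funext ω
    simp only [Function.comp_apply, gwS]
    exact Finset.sum_coe_sort B (fun i => Z i ω)
  rwa [e1, e2] at h1

lemma gw_indep_PP (hindep : iIndepFun Z P)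
    (hmeas : ∀ i, Measurable (Z i)) {A B C : Finset ℕ}
    (hAC : Disjoint A C) (hBC : Disjoint B C) (p q c : ℕ) :
    IndepFun (fun ω => gwS Z A ω ^ p * gwS Z B ω ^ q) (fun ω => gwS Z C ω ^ c) P := by
  classical
  set s : Finset ℕ := A ∪ B with hs
  have hsC : Disjoint s C := Finset.disjoint_union_left.mpr ⟨hAC, hBC⟩
  have hφ : Measurable (fun x : s → ℝ =>
      (∑ i ∈ s.attach, if (i : ℕ) ∈ A then x i else 0) ^ p *
      (∑ i ∈ s.attach, if (i : ℕ) ∈ B then x i else 0) ^ q) := by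
    apply Measurable.mul
    · apply Measurable.pow_const
      apply Finset.measurable_sum
      intro i _
      by_cases h : (i : ℕ) ∈ A <;> simp only [h, if_true, if_false]
      · exact measurable_pi_apply i
      · exact measurable_const
    · apply Measurable.pow_const
      apply Finset.measurable_sum
      intro i _
      by_cases h : (i : ℕ) ∈ B <;> simp only [h, if_true, if_false]
      · exact measurable_pi_apply i
      · exact measurable_const
  have hψ : Measurable (fun x : C → ℝ => (∑ i, x i) ^ c) :=
    (Finset.measurable_sum Finset.univ (fun i _ => measurable_pi_apply i)).pow_const c
  have h1 := (hindep.indepFun_finset s C hsC hmeas).comp hφ hψ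
  have e1 : ((fun x : s → ℝ =>
      (∑ i ∈ s.attach, if (i : ℕ) ∈ A then x i else 0) ^ p *
      (∑ i ∈ s.attach, if (i : ℕ) ∈ B then x i else 0) ^ q) ∘ (fun ω (i : s) => Z i ω))
      = fun ω => gwS Z A ω ^ p * gwS Z B ω ^ q := by
    funext ω
    simp only [Function.comp_apply, gwS]
    rw [Finset.sum_attach s (fun i => if i ∈ A then Z i ω else 0),
      Finset.sum_attach s (fun i => if i ∈ B then Z i ω else 0),
      Finset.sum_ite_mem, Finset.sum_ite_mem, hs,
      Finset.union_inter_cancel_left, Finset.union_inter_cancel_right]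
  have e2 : ((fun x : C → ℝ => (∑ i, x i) ^ c) ∘ (fun ω (i : C) => Z i ω))
      = fun ω => gwS Z C ω ^ c := by
    funext ω
    simp only [Function.comp_apply, gwS]
    rw [Finset.sum_coe_sort C (fun i => Z i ω)]
  rwa [e1, e2] at h1

lemma gw_S_int (hindep : iIndepFun Z P)
    (hmeas : ∀ i, Measurable (Z i)) (hdist : ∀ i, P.map (Z i) = expMeasure 1)
    (A : Finset ℕ) : ∀ p : ℕ, Integrable (fun ω => gwS Z A ω ^ p) P := by
  classical
  induction A using Finset.induction with
  | empty =>
    intro p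
    have : (fun ω : Ω => gwS Z ∅ ω ^ p) = fun _ : Ω => (0 : ℝ) ^ p := by
      funext ω; rw [gwS]; simp
    rw [this]
    exact integrable_const _
  | insert i A hi ih =>
    intro p
    have hexp : (fun ω => gwS Z (insert i A) ω ^ p)
        = fun ω => ∑ j ∈ Finset.range (p + 1),
            Z i ω ^ j * gwS Z A ω ^ (p - j) * (p.choose j : ℝ) := by
      funext ω
      rw [gwS, Finset.sum_insert hi, ← gwS, add_pow]
    rw [hexp]
    apply integrable_finset_sum
    intro j _
    have hind : IndepFun (fun ω => Z i ω ^ j) (fun ω => gwS Z A ω ^ (p - j)) P := by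
      have := (gw_indep_ZS hindep hmeas hi).comp
        (measurable_id.pow_const j) (measurable_id.pow_const (p - j))
      exact this
    exact (hind.integrable_mul (gw_Z_int hmeas hdist i j) (ih (p - j))).mul_const _

lemma gw_S_mom (hindep : iIndepFun Z P)
    (hmeas : ∀ i, Measurable (Z i)) (hdist : ∀ i, P.map (Z i) = expMeasure 1)
    (A : Finset ℕ) : ∀ p : ℕ, p ≤ 4 → (∫ ω, gwS Z A ω ^ p ∂P) = gwRF A.card p := by
  classical
  induction A using Finset.induction with
  | empty =>
    intro p hp
    have h0 : (fun ω : Ω => gwS Z ∅ ω ^ p) = fun _ : Ω => (0 : ℝ) ^ p := by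
      funext ω; rw [gwS]; simp
    rw [h0]
    interval_cases p <;>
      simp [gwRF, Finset.prod_range_succ, measure_univ]
  | insert i A hi ih =>
    intro p hp
    have hexp : (fun ω => gwS Z (insert i A) ω ^ p)
        = fun ω => ∑ j ∈ Finset.range (p + 1),
            Z i ω ^ j * gwS Z A ω ^ (p - j) * (p.choose j : ℝ) := by
      funext ω
      rw [gwS, Finset.sum_insert hi, ← gwS, add_pow]
    rw [hexp, integral_finset_sum]
    swap
    · intro j _
      have hind : IndepFun (fun ω => Z i ω ^ j) (fun ω => gwS Z A ω ^ (p - j)) P :=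
        (gw_indep_ZS hindep hmeas hi).comp
          (measurable_id.pow_const j) (measurable_id.pow_const (p - j))
      exact (hind.integrable_mul (gw_Z_int hmeas hdist i j) (gw_S_int hindep hmeas hdist A (p - j))).mul_const _
    have hterm : ∀ j ∈ Finset.range (p + 1),
        (∫ ω, Z i ω ^ j * gwS Z A ω ^ (p - j) * (p.choose j : ℝ) ∂P)
          = (j ! : ℝ) * gwRF A.card (p - j) * (p.choose j : ℝ) := by
      intro j hj
      have hind : IndepFun (fun ω => Z i ω ^ j) (fun ω => gwS Z A ω ^ (p - j)) P :=
        (gw_indep_ZS hindep hmeas hi).comp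
          (measurable_id.pow_const j) (measurable_id.pow_const (p - j))
      rw [integral_mul_const, hind.integral_fun_mul_eq_mul_integral (gw_Z_int hmeas hdist i j).1
        (gw_S_int hindep hmeas hdist A (p - j)).1, gw_Z_mom hmeas hdist i j,
        ih (p - j) (le_trans (Nat.sub_le _ _) hp)]
    rw [Finset.sum_congr rfl hterm, Finset.card_insert_of_notMem hi]
    interval_cases p <;>
      · simp only [Finset.sum_range_succ, Finset.sum_range_zero, gwRF, Finset.prod_range_succ,
          Finset.prod_range_zero]
        norm_num [Nat.factorial, Nat.choose]
        try { push_cast; ring }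

end GW

section GW2

variable {Ω : Type*} [MeasurableSpace Ω] {P : Measure Ω} [IsProbabilityMeasure P]
  {Z : ℕ → Ω → ℝ}

lemma gw_S3_int (hindep : iIndepFun Z P)
    (hmeas : ∀ i, Measurable (Z i)) (hdist : ∀ i, P.map (Z i) = expMeasure 1)
    {A B C : Finset ℕ} (hAB : Disjoint A B) (hAC : Disjoint A C) (hBC : Disjoint B C)
    (a b c : ℕ) :
    Integrable (fun ω => gwS Z A ω ^ a * gwS Z B ω ^ b * gwS Z C ω ^ c) P := by
  have h1 : IndepFun (fun ω => gwS Z A ω ^ a) (fun ω => gwS Z B ω ^ b) P :=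
    (gw_indep_SS hindep hmeas hAB).comp (measurable_id.pow_const a) (measurable_id.pow_const b)
  have hAB_int : Integrable (fun ω => gwS Z A ω ^ a * gwS Z B ω ^ b) P :=
    h1.integrable_mul (gw_S_int hindep hmeas hdist A a) (gw_S_int hindep hmeas hdist B b)
  have h2 := gw_indep_PP hindep hmeas hAC hBC a b c
  exact h2.integrable_mul hAB_int (gw_S_int hindep hmeas hdist C c)

lemma gw_S3_mom (hindep : iIndepFun Z P)
    (hmeas : ∀ i, Measurable (Z i)) (hdist : ∀ i, P.map (Z i) = expMeasure 1)
    {A B C : Finset ℕ} (hAB : Disjoint A B) (hAC : Disjoint A C) (hBC : Disjoint B C)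
    {a b c : ℕ} (ha : a ≤ 4) (hb : b ≤ 4) (hc : c ≤ 4) :
    (∫ ω, gwS Z A ω ^ a * gwS Z B ω ^ b * gwS Z C ω ^ c ∂P)
      = gwRF A.card a * gwRF B.card b * gwRF C.card c := by
  have h1 : IndepFun (fun ω => gwS Z A ω ^ a) (fun ω => gwS Z B ω ^ b) P :=
    (gw_indep_SS hindep hmeas hAB).comp (measurable_id.pow_const a) (measurable_id.pow_const b)
  have hAB_int : Integrable (fun ω => gwS Z A ω ^ a * gwS Z B ω ^ b) P :=
    h1.integrable_mul (gw_S_int hindep hmeas hdist A a) (gw_S_int hindep hmeas hdist B b)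
  have h2 := gw_indep_PP hindep hmeas hAC hBC a b c
  rw [h2.integral_fun_mul_eq_mul_integral hAB_int.1 (gw_S_int hindep hmeas hdist C c).1,
    h1.integral_fun_mul_eq_mul_integral (gw_S_int hindep hmeas hdist A a).1 (gw_S_int hindep hmeas hdist B b).1,
    gw_S_mom hindep hmeas hdist A a ha, gw_S_mom hindep hmeas hdist B b hb,
    gw_S_mom hindep hmeas hdist C c hc]

lemma gw_XY_expand {A B C : Finset ℕ} (p q : ℕ) (ω : Ω) :
    (gwS Z A ω + gwS Z B ω) ^ p * (gwS Z A ω + gwS Z C ω) ^ q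
      = ∑ i ∈ Finset.range (p + 1), ∑ j ∈ Finset.range (q + 1),
          gwS Z A ω ^ (i + j) * gwS Z B ω ^ (p - i) * gwS Z C ω ^ (q - j)
            * ((p.choose i : ℝ) * (q.choose j : ℝ)) := by
  rw [add_pow, add_pow, Finset.sum_mul_sum]
  apply Finset.sum_congr rfl
  intro i _
  apply Finset.sum_congr rfl
  intro j _
  rw [pow_add]
  ring

lemma gw_XY_int (hindep : iIndepFun Z P)
    (hmeas : ∀ i, Measurable (Z i)) (hdist : ∀ i, P.map (Z i) = expMeasure 1)
    {A B C : Finset ℕ} (hAB : Disjoint A B) (hAC : Disjoint A C) (hBC : Disjoint B C)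
    (p q : ℕ) :
    Integrable (fun ω => (gwS Z A ω + gwS Z B ω) ^ p * (gwS Z A ω + gwS Z C ω) ^ q) P := by
  simp_rw [gw_XY_expand p q]
  apply integrable_finset_sum
  intro i _
  apply integrable_finset_sum
  intro j _
  exact (gw_S3_int hindep hmeas hdist hAB hAC hBC _ _ _).mul_const _

lemma gw_XY_mom (hindep : iIndepFun Z P)
    (hmeas : ∀ i, Measurable (Z i)) (hdist : ∀ i, P.map (Z i) = expMeasure 1)
    {A B C : Finset ℕ} (hAB : Disjoint A B) (hAC : Disjoint A C) (hBC : Disjoint B C)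
    {p q : ℕ} (hp : p ≤ 2) (hq : q ≤ 2) :
    (∫ ω, (gwS Z A ω + gwS Z B ω) ^ p * (gwS Z A ω + gwS Z C ω) ^ q ∂P)
      = ∑ i ∈ Finset.range (p + 1), ∑ j ∈ Finset.range (q + 1),
          gwRF A.card (i + j) * gwRF B.card (p - i) * gwRF C.card (q - j)
            * ((p.choose i : ℝ) * (q.choose j : ℝ)) := by
  simp_rw [gw_XY_expand p q]
  rw [integral_finset_sum _ (fun i _ => integrable_finset_sum _ (fun j _ =>
    (gw_S3_int hindep hmeas hdist hAB hAC hBC _ _ _).mul_const _))]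
  apply Finset.sum_congr rfl
  intro i hi
  rw [integral_finset_sum _ (fun j _ =>
    (gw_S3_int hindep hmeas hdist hAB hAC hBC _ _ _).mul_const _)]
  apply Finset.sum_congr rfl
  intro j hj
  rw [integral_mul_const, gw_S3_mom hindep hmeas hdist hAB hAC hBC
    (by simp at hi hj; omega) (le_trans (Nat.sub_le _ _) (by omega))
    (le_trans (Nat.sub_le _ _) (by omega))]

lemma gw_cov_expand {F G : Ω → ℝ} (hF : Integrable F P) (hG : Integrable G P)
    (hFG : Integrable (fun ω => F ω * G ω) P) :
    cov P F G = (∫ ω, F ω * G ω ∂P) - (∫ ω, F ω ∂P) * (∫ ω, G ω ∂P) := by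
  unfold cov
  set c := ∫ ω, F ω ∂P with hc
  set d := ∫ ω, G ω ∂P with hd
  have h : (fun ω => (F ω - c) * (G ω - d))
      = fun ω => F ω * G ω - c * G ω - d * F ω + c * d := by
    funext ω; ring
  have i1 : Integrable (fun ω => F ω * G ω - c * G ω) P := hFG.sub (hG.const_mul c)
  have i2 : Integrable (fun ω => F ω * G ω - c * G ω - d * F ω) P := i1.sub (hF.const_mul d)
  rw [show (∫ ω, (F ω - c) * (G ω - d) ∂P)
      = ∫ ω, F ω * G ω - c * G ω - d * F ω + c * d ∂P from by rw [← h],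
    integral_add i2 (integrable_const _),
    integral_sub i1 (hF.const_mul d),
    integral_sub hFG (hG.const_mul c), integral_const_mul, integral_const_mul,
    integral_const]
  simp [measure_univ, ← hc, ← hd]
  ring

end GW2

section GW3

variable {Ω : Type*} [MeasurableSpace Ω] {P : Measure Ω} [IsProbabilityMeasure P]
  {Z : ℕ → Ω → ℝ}

lemma gw_cov1 (hindep : iIndepFun Z P)
    (hmeas : ∀ i, Measurable (Z i)) (hdist : ∀ i, P.map (Z i) = expMeasure 1)
    {A : Finset ℕ} {m : ℕ} (hm : m = A.card) :
    cov P (fun ω => gwS Z A ω ^ 2 - 2 * (m : ℝ) * gwS Z A ω) (gwS Z A) = 2 * (m : ℝ) := by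
  have hint : ∀ p : ℕ, Integrable (fun ω => gwS Z A ω ^ p) P := gw_S_int hindep hmeas hdist A
  have hmom : ∀ p : ℕ, p ≤ 4 → (∫ ω, gwS Z A ω ^ p ∂P) = gwRF A.card p :=
    gw_S_mom hindep hmeas hdist A
  have i1 : Integrable (fun ω => gwS Z A ω) P := by
    have := hint 1; simpa using this
  have hF : Integrable (fun ω => gwS Z A ω ^ 2 - 2 * (m : ℝ) * gwS Z A ω) P :=
    (hint 2).sub (i1.const_mul _)
  have hFG : Integrable (fun ω =>
      (gwS Z A ω ^ 2 - 2 * (m : ℝ) * gwS Z A ω) * gwS Z A ω) P := by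
    have h3 : Integrable (fun ω => gwS Z A ω ^ 3 - 2 * (m : ℝ) * gwS Z A ω ^ 2) P :=
      (hint 3).sub ((hint 2).const_mul _)
    apply h3.congr
    filter_upwards with ω
    ring
  rw [gw_cov_expand hF i1 hFG]
  have e1 : (∫ ω, gwS Z A ω ∂P) = gwRF A.card 1 := by
    rw [← hmom 1 (by norm_num)]
    apply integral_congr_ae
    filter_upwards with ω
    simp
  have eFG : (∫ ω, (gwS Z A ω ^ 2 - 2 * (m : ℝ) * gwS Z A ω) * gwS Z A ω ∂P)
      = gwRF A.card 3 - 2 * (m : ℝ) * gwRF A.card 2 := by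
    have hpt : (fun ω => (gwS Z A ω ^ 2 - 2 * (m : ℝ) * gwS Z A ω) * gwS Z A ω)
        = fun ω => gwS Z A ω ^ 3 - 2 * (m : ℝ) * gwS Z A ω ^ 2 := by
      funext ω; ring
    rw [hpt, integral_sub (hint 3) ((hint 2).const_mul _), integral_const_mul,
      hmom 3 (by norm_num), hmom 2 (by norm_num)]
  have eF : (∫ ω, (gwS Z A ω ^ 2 - 2 * (m : ℝ) * gwS Z A ω) ∂P)
      = gwRF A.card 2 - 2 * (m : ℝ) * gwRF A.card 1 := by
    rw [integral_sub (hint 2) (i1.const_mul _), integral_const_mul, hmom 2 (by norm_num), e1]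
  rw [eFG, eF, e1, hm]
  simp only [gwRF, Finset.prod_range_succ, Finset.prod_range_zero]
  push_cast
  ring

lemma gw_cov3 (hindep : iIndepFun Z P)
    (hmeas : ∀ i, Measurable (Z i)) (hdist : ∀ i, P.map (Z i) = expMeasure 1)
    {A B C : Finset ℕ} (hAB : Disjoint A B) (hAC : Disjoint A C) (hBC : Disjoint B C)
    (hcard : B.card = C.card) {m : ℕ} (hm : m = A.card + B.card) :
    cov P (fun ω => (gwS Z A ω + gwS Z B ω) ^ 2 - 2 * (m : ℝ) * (gwS Z A ω + gwS Z B ω))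
        (fun ω => (gwS Z A ω + gwS Z C ω) ^ 2 - 2 * (m : ℝ) * (gwS Z A ω + gwS Z C ω))
      = 2 * (A.card : ℝ) ^ 2 + 6 * (A.card : ℝ) := by
  set X : Ω → ℝ := fun ω => gwS Z A ω + gwS Z B ω with hX
  set Y : Ω → ℝ := fun ω => gwS Z A ω + gwS Z C ω with hY
  have hintpq : ∀ p q : ℕ, Integrable (fun ω => X ω ^ p * Y ω ^ q) P :=
    fun p q => gw_XY_int hindep hmeas hdist hAB hAC hBC p q
  have hmompq : ∀ p q : ℕ, p ≤ 2 → q ≤ 2 → (∫ ω, X ω ^ p * Y ω ^ q ∂P)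
      = ∑ i ∈ Finset.range (p + 1), ∑ j ∈ Finset.range (q + 1),
          gwRF A.card (i + j) * gwRF B.card (p - i) * gwRF C.card (q - j)
            * ((p.choose i : ℝ) * (q.choose j : ℝ)) :=
    fun p q hp hq => gw_XY_mom hindep hmeas hdist hAB hAC hBC hp hq
  have hF : Integrable (fun ω => X ω ^ 2 - 2 * (m : ℝ) * X ω) P := by
    have h1 : Integrable (fun ω => X ω ^ 2 * Y ω ^ 0 - 2 * (m : ℝ) * (X ω ^ 1 * Y ω ^ 0)) P :=
      (hintpq 2 0).sub ((hintpq 1 0).const_mul _)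
    apply h1.congr
    filter_upwards with ω
    ring
  have hG : Integrable (fun ω => Y ω ^ 2 - 2 * (m : ℝ) * Y ω) P := by
    have h1 : Integrable (fun ω => X ω ^ 0 * Y ω ^ 2 - 2 * (m : ℝ) * (X ω ^ 0 * Y ω ^ 1)) P :=
      (hintpq 0 2).sub ((hintpq 0 1).const_mul _)
    apply h1.congr
    filter_upwards with ω
    ring
  have hptFG : (fun ω => (X ω ^ 2 - 2 * (m : ℝ) * X ω) * (Y ω ^ 2 - 2 * (m : ℝ) * Y ω))
      = fun ω => X ω ^ 2 * Y ω ^ 2 - 2 * (m : ℝ) * (X ω ^ 2 * Y ω ^ 1)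
          - 2 * (m : ℝ) * (X ω ^ 1 * Y ω ^ 2)
          + (2 * (m : ℝ)) * (2 * (m : ℝ)) * (X ω ^ 1 * Y ω ^ 1) := by
    funext ω; ring
  have i21 : Integrable (fun ω => X ω ^ 2 * Y ω ^ 2 - 2 * (m : ℝ) * (X ω ^ 2 * Y ω ^ 1)) P :=
    (hintpq 2 2).sub ((hintpq 2 1).const_mul _)
  have i22 : Integrable (fun ω => X ω ^ 2 * Y ω ^ 2 - 2 * (m : ℝ) * (X ω ^ 2 * Y ω ^ 1)
      - 2 * (m : ℝ) * (X ω ^ 1 * Y ω ^ 2)) P := i21.sub ((hintpq 1 2).const_mul _)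
  have hFG : Integrable (fun ω =>
      (X ω ^ 2 - 2 * (m : ℝ) * X ω) * (Y ω ^ 2 - 2 * (m : ℝ) * Y ω)) P := by
    rw [hptFG]
    exact i22.add ((hintpq 1 1).const_mul _)
  rw [gw_cov_expand hF hG hFG]
  have eFG : (∫ ω, (X ω ^ 2 - 2 * (m : ℝ) * X ω) * (Y ω ^ 2 - 2 * (m : ℝ) * Y ω) ∂P)
      = (∫ ω, X ω ^ 2 * Y ω ^ 2 ∂P) - 2 * (m : ℝ) * (∫ ω, X ω ^ 2 * Y ω ^ 1 ∂P)
        - 2 * (m : ℝ) * (∫ ω, X ω ^ 1 * Y ω ^ 2 ∂P)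
        + (2 * (m : ℝ)) * (2 * (m : ℝ)) * (∫ ω, X ω ^ 1 * Y ω ^ 1 ∂P) := by
    rw [hptFG, integral_add i22 ((hintpq 1 1).const_mul _), integral_sub i21
      ((hintpq 1 2).const_mul _), integral_sub (hintpq 2 2) ((hintpq 2 1).const_mul _),
      integral_const_mul, integral_const_mul, integral_const_mul]
  have eF : (∫ ω, (X ω ^ 2 - 2 * (m : ℝ) * X ω) ∂P)
      = (∫ ω, X ω ^ 2 * Y ω ^ 0 ∂P) - 2 * (m : ℝ) * (∫ ω, X ω ^ 1 * Y ω ^ 0 ∂P) := by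
    have hpt : (fun ω => X ω ^ 2 - 2 * (m : ℝ) * X ω)
        = fun ω => X ω ^ 2 * Y ω ^ 0 - 2 * (m : ℝ) * (X ω ^ 1 * Y ω ^ 0) := by
      funext ω; ring
    rw [hpt, integral_sub (hintpq 2 0) ((hintpq 1 0).const_mul _), integral_const_mul]
  have eG : (∫ ω, (Y ω ^ 2 - 2 * (m : ℝ) * Y ω) ∂P)
      = (∫ ω, X ω ^ 0 * Y ω ^ 2 ∂P) - 2 * (m : ℝ) * (∫ ω, X ω ^ 0 * Y ω ^ 1 ∂P) := by
    have hpt : (fun ω => Y ω ^ 2 - 2 * (m : ℝ) * Y ω)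
        = fun ω => X ω ^ 0 * Y ω ^ 2 - 2 * (m : ℝ) * (X ω ^ 0 * Y ω ^ 1) := by
      funext ω; ring
    rw [hpt, integral_sub (hintpq 0 2) ((hintpq 0 1).const_mul _), integral_const_mul]
  rw [eFG, eF, eG, hmompq 2 2 (by norm_num) (by norm_num), hmompq 2 1 (by norm_num) (by norm_num),
    hmompq 1 2 (by norm_num) (by norm_num), hmompq 1 1 (by norm_num) (by norm_num),
    hmompq 2 0 (by norm_num) (by norm_num), hmompq 1 0 (by norm_num) (by norm_num),
    hmompq 0 2 (by norm_num) (by norm_num), hmompq 0 1 (by norm_num) (by norm_num)]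
  rw [← hcard, hm]
  simp only [Finset.sum_range_succ, Finset.sum_range_zero, gwRF, Finset.prod_range_succ,
    Finset.prod_range_zero]
  norm_num [Nat.choose]
  push_cast
  ring

end GW3

lemma gw_disj {a b c d : ℕ} (h : b ≤ c) : Disjoint (Finset.Ico a b) (Finset.Ico c d) := by
  apply Finset.disjoint_left.mpr
  intro x hx hx'
  simp only [Finset.mem_Ico] at hx hx'
  omega

lemma gw_G : ∀ n : ℕ, ∑ j ∈ Finset.Ioc 0 n, (2 * (j : ℝ) ^ 2 + 6 * (j : ℝ))
    = (n : ℝ) * ((n : ℝ) + 1) * (2 * (n : ℝ) + 1) / 3 + 3 * (n : ℝ) * ((n : ℝ) + 1) := by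
  intro n
  induction n with
  | zero => simp
  | succ n ih =>
    rw [Finset.sum_Ioc_succ_top (Nat.zero_le n), ih]
    push_cast
    ring

lemma gw_H : ∀ n : ℕ, ∑ k ∈ Finset.range n, (2 * (k : ℝ) ^ 2 + 6 * (k : ℝ))
    = (n : ℝ) * ((n : ℝ) - 1) * (2 * (n : ℝ) - 1) / 3 + 3 * (n : ℝ) * ((n : ℝ) - 1) := by
  intro n
  induction n with
  | zero => norm_num
  | succ n ih =>
    rw [Finset.sum_range_succ, ih]
    push_cast
    ring

theorem greenwood_kernel_variance_constants
    {Ω : Type*} [MeasurableSpace Ω] (P : Measure Ω) [IsProbabilityMeasure P]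
    (Z : ℕ → Ω → ℝ) (hmeas : ∀ i, Measurable (Z i))
    (hindep : iIndepFun Z P)
    (hdist : ∀ i, P.map (Z i) = expMeasure 1)
    (m : ℕ) (hm : 1 ≤ m)
    (ζ : ℕ → Ω → ℝ) (hζ : ∀ j ω, ζ j ω = ∑ i ∈ Finset.range m, Z (j + i) ω)
    (g : ℝ → ℝ) (hg : ∀ x, g x = x ^ 2 - 2 * m * x) :
    cov P (fun ω => g (ζ 1 ω)) (ζ 1) = 2 * m ∧
      (∑ j ∈ Finset.Icc 1 (2 * m), cov P (fun ω => g (ζ m ω)) (fun ω => g (ζ j ω)))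
          - (cov P (fun ω => g (ζ 1 ω)) (ζ 1)) ^ 2
        = 2 * m * (m + 1) * (2 * m + 1) / 3 := by
  have hζIco : ∀ j, ζ j = gwS Z (Finset.Ico j (j + m)) := by
    intro j
    funext ω
    rw [hζ, gwS, Finset.sum_Ico_eq_sum_range, Nat.add_sub_cancel_left]
  have h1 : cov P (fun ω => g (ζ 1 ω)) (ζ 1) = 2 * (m : ℝ) := by
    have hgζ1 : (fun ω => g (ζ 1 ω))
        = fun ω => gwS Z (Finset.Ico 1 (1 + m)) ω ^ 2
            - 2 * (m : ℝ) * gwS Z (Finset.Ico 1 (1 + m)) ω := by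
      funext ω
      rw [hg, hζIco 1]
    rw [hgζ1, hζIco 1]
    exact gw_cov1 hindep hmeas hdist
      (show m = (Finset.Ico 1 (1 + m)).card by rw [Nat.card_Ico]; omega)
  refine ⟨h1, ?_⟩
  have hcov : ∀ j ∈ Finset.Ioc 0 (2 * m),
      cov P (fun ω => g (ζ m ω)) (fun ω => g (ζ j ω))
        = if j ≤ m then 2 * (j : ℝ) ^ 2 + 6 * (j : ℝ)
          else 2 * ((2 * m - j : ℕ) : ℝ) ^ 2 + 6 * ((2 * m - j : ℕ) : ℝ) := by
    intro j hj
    simp only [Finset.mem_Ioc] at hj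
    by_cases hjm : j ≤ m
    · rw [if_pos hjm]
      have hXdec : ζ m = fun ω => gwS Z (Finset.Ico m (j + m)) ω
          + gwS Z (Finset.Ico (j + m) (2 * m)) ω := by
        funext ω
        rw [hζIco m, gwS, gwS, gwS, show m + m = 2 * m from by ring]
        exact (Finset.sum_Ico_consecutive (fun i => Z i ω)
          (show m ≤ j + m by omega) (show j + m ≤ 2 * m by omega)).symm
      have hYdec : ζ j = fun ω => gwS Z (Finset.Ico m (j + m)) ω
          + gwS Z (Finset.Ico j m) ω := by
        funext ω
        rw [hζIco j, gwS, gwS, gwS,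
          add_comm (∑ i ∈ Finset.Ico m (j + m), Z i ω) (∑ i ∈ Finset.Ico j m, Z i ω)]
        exact (Finset.sum_Ico_consecutive (fun i => Z i ω)
          (show j ≤ m by omega) (show m ≤ j + m by omega)).symm
      have hgX : (fun ω => g (ζ m ω)) = fun ω =>
          (gwS Z (Finset.Ico m (j + m)) ω + gwS Z (Finset.Ico (j + m) (2 * m)) ω) ^ 2
            - 2 * (m : ℝ) * (gwS Z (Finset.Ico m (j + m)) ω
              + gwS Z (Finset.Ico (j + m) (2 * m)) ω) := by
        funext ω
        rw [hg, hXdec]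
      have hgY : (fun ω => g (ζ j ω)) = fun ω =>
          (gwS Z (Finset.Ico m (j + m)) ω + gwS Z (Finset.Ico j m) ω) ^ 2
            - 2 * (m : ℝ) * (gwS Z (Finset.Ico m (j + m)) ω
              + gwS Z (Finset.Ico j m) ω) := by
        funext ω
        rw [hg, hYdec]
      rw [hgX, hgY, gw_cov3 hindep hmeas hdist
        (A := Finset.Ico m (j + m)) (B := Finset.Ico (j + m) (2 * m)) (C := Finset.Ico j m)
        (gw_disj (show j + m ≤ j + m by omega))
        ((gw_disj (show m ≤ m by omega)).symm)
        ((gw_disj (show m ≤ j + m by omega)).symm)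
        (show (Finset.Ico (j + m) (2 * m)).card = (Finset.Ico j m).card by
          rw [Nat.card_Ico, Nat.card_Ico]; omega)
        (show m = (Finset.Ico m (j + m)).card + (Finset.Ico (j + m) (2 * m)).card by
          rw [Nat.card_Ico, Nat.card_Ico]; omega), Nat.card_Ico,
        show j + m - m = j from by omega]
    · rw [if_neg hjm]
      have hXdec : ζ m = fun ω => gwS Z (Finset.Ico j (2 * m)) ω
          + gwS Z (Finset.Ico m j) ω := by
        funext ω
        rw [hζIco m, gwS, gwS, gwS, show m + m = 2 * m from by ring,
          add_comm (∑ i ∈ Finset.Ico j (2 * m), Z i ω) (∑ i ∈ Finset.Ico m j, Z i ω)]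
        exact (Finset.sum_Ico_consecutive (fun i => Z i ω)
          (show m ≤ j by omega) (show j ≤ 2 * m by omega)).symm
      have hYdec : ζ j = fun ω => gwS Z (Finset.Ico j (2 * m)) ω
          + gwS Z (Finset.Ico (2 * m) (j + m)) ω := by
        funext ω
        rw [hζIco j, gwS, gwS, gwS]
        exact (Finset.sum_Ico_consecutive (fun i => Z i ω)
          (show j ≤ 2 * m by omega) (show 2 * m ≤ j + m by omega)).symm
      have hgX : (fun ω => g (ζ m ω)) = fun ω =>
          (gwS Z (Finset.Ico j (2 * m)) ω + gwS Z (Finset.Ico m j) ω) ^ 2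
            - 2 * (m : ℝ) * (gwS Z (Finset.Ico j (2 * m)) ω
              + gwS Z (Finset.Ico m j) ω) := by
        funext ω
        rw [hg, hXdec]
      have hgY : (fun ω => g (ζ j ω)) = fun ω =>
          (gwS Z (Finset.Ico j (2 * m)) ω + gwS Z (Finset.Ico (2 * m) (j + m)) ω) ^ 2
            - 2 * (m : ℝ) * (gwS Z (Finset.Ico j (2 * m)) ω
              + gwS Z (Finset.Ico (2 * m) (j + m)) ω) := by
        funext ω
        rw [hg, hYdec]
      rw [hgX, hgY, gw_cov3 hindep hmeas hdist
        (A := Finset.Ico j (2 * m)) (B := Finset.Ico m j) (C := Finset.Ico (2 * m) (j + m))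
        ((gw_disj (show j ≤ j by omega)).symm)
        (gw_disj (show 2 * m ≤ 2 * m by omega))
        (gw_disj (show j ≤ 2 * m by omega))
        (show (Finset.Ico m j).card = (Finset.Ico (2 * m) (j + m)).card by
          rw [Nat.card_Ico, Nat.card_Ico]; omega)
        (show m = (Finset.Ico j (2 * m)).card + (Finset.Ico m j).card by
          rw [Nat.card_Ico, Nat.card_Ico]; omega), Nat.card_Ico]
  have hsum : (∑ j ∈ Finset.Icc 1 (2 * m), cov P (fun ω => g (ζ m ω)) (fun ω => g (ζ j ω)))
      = (∑ j ∈ Finset.Ioc 0 m, (2 * (j : ℝ) ^ 2 + 6 * (j : ℝ)))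
        + ∑ k ∈ Finset.range m, (2 * (k : ℝ) ^ 2 + 6 * (k : ℝ)) := by
    rw [show Finset.Icc 1 (2 * m) = Finset.Ioc 0 (2 * m) from Finset.Icc_add_one_left_eq_Ioc 0 (2 * m),
      Finset.sum_congr rfl hcov,
      ← Finset.sum_Ioc_consecutive _ (Nat.zero_le m) (by omega : m ≤ 2 * m)]
    congr 1
    · apply Finset.sum_congr rfl
      intro j hj
      simp only [Finset.mem_Ioc] at hj
      rw [if_pos hj.2]
    · rw [Finset.sum_congr rfl (fun j hj => by
        simp only [Finset.mem_Ioc] at hj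
        rw [if_neg (by omega)])]
      apply Finset.sum_nbij' (i := fun j => 2 * m - j) (j := fun k => 2 * m - k)
      · intro a ha
        simp only [Finset.mem_Ioc] at ha
        simp only [Finset.mem_range]
        omega
      · intro a ha
        simp only [Finset.mem_range] at ha
        simp only [Finset.mem_Ioc]
        omega
      · intro a ha
        simp only [Finset.mem_Ioc] at ha
        omega
      · intro a ha
        simp only [Finset.mem_range] at ha
        omega
      · intro a _
        rfl
  rw [hsum, h1, gw_G m, gw_H m]
  push_cast
  ring
end
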